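/- Let B be a Hermitian matrix, u a unit vector with α = ⟨Bu, u⟩, and s = u + τ(I - uu*)t a minimizer of the Rayleigh quotient ρ over span{u, (I - uu*)t}. With J := (I - uu*)(B - ρ(s)I)(I - uu*), one has (B - ρ(s)I)s = (B - αI)u + J(s - u). -/

import Mathlib

open Matrix
open scoped ComplexConjugate

/-- Squared Euclidean norm of a complex vector. -/
noncomputable def nsq {k : ℕ} (x : Fin k → ℂ) : ℝ := ∑ i, ‖x i‖ ^ 2

/-- Standard Hermitian inner product (conjugate-linear in the first argument). -/
noncomputable def cip {k : ℕ} (x y : Fin k → ℂ) : ℂ := ∑ i, conj (x i) * y i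

/-- Orthogonal projection `(I - yy*) v`. -/
noncomputable def proj {k : ℕ} (y v : Fin k → ℂ) : Fin k → ℂ := v - cip y v • y

/-- Rayleigh quotient of a vector with respect to a (Hermitian) matrix. -/
noncomputable def rq {k : ℕ} (B : Matrix (Fin k) (Fin k) ℂ) (x : Fin k → ℂ) : ℝ :=
  (cip (B.mulVec x) x).re / nsq x

lemma conj_cip {k : ℕ} (x y : Fin k → ℂ) : conj (cip x y) = cip y x := by
  simp [cip, map_sum, mul_comm]

lemma cip_self {k : ℕ} (x : Fin k → ℂ) : cip x x = ((nsq x : ℝ) : ℂ) := by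
  simp [cip, nsq, Complex.conj_mul', Complex.normSq_eq_norm_sq]

lemma cip_add_right {k : ℕ} (x y z : Fin k → ℂ) : cip x (y + z) = cip x y + cip x z := by
  simp [cip, mul_add, Finset.sum_add_distrib]

lemma cip_sub_right {k : ℕ} (x y z : Fin k → ℂ) : cip x (y - z) = cip x y - cip x z := by
  simp [cip, mul_sub, Finset.sum_sub_distrib]

lemma cip_smul_right {k : ℕ} (a : ℂ) (x y : Fin k → ℂ) : cip x (a • y) = a * cip x y := by
  simp only [cip, Pi.smul_apply, smul_eq_mul, Finset.mul_sum]
  exact Finset.sum_congr rfl fun i _ => by ring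

lemma cip_add_left {k : ℕ} (x y z : Fin k → ℂ) : cip (x + y) z = cip x z + cip y z := by
  simp [cip, add_mul, Finset.sum_add_distrib]

lemma cip_smul_left {k : ℕ} (a : ℂ) (x y : Fin k → ℂ) : cip (a • x) y = conj a * cip x y := by
  simp only [cip, Pi.smul_apply, smul_eq_mul, _root_.map_mul, Finset.mul_sum]
  exact Finset.sum_congr rfl fun i _ => by ring

lemma nsq_nonneg {k : ℕ} (x : Fin k → ℂ) : 0 ≤ nsq x := by
  apply Finset.sum_nonneg; intro i _; positivity

lemma nsq_eq_zero {k : ℕ} {x : Fin k → ℂ} (h : nsq x = 0) : x = 0 := by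
  funext i
  have := (Finset.sum_eq_zero_iff_of_nonneg (fun i _ => by positivity)).1 h i (Finset.mem_univ i)
  simpa [pow_eq_zero_iff, norm_eq_zero] using this

lemma cip_herm {k : ℕ} {B : Matrix (Fin k) (Fin k) ℂ} (hB : Bᴴ = B) (x y : Fin k → ℂ) :
    cip (B.mulVec x) y = cip x (B.mulVec y) := by
  have h : ∀ i j, conj (B i j) = B j i := by
    intro i j
    conv_rhs => rw [← hB]
    rfl
  simp only [cip, Matrix.mulVec, dotProduct, map_sum, _root_.map_mul, Finset.sum_mul,
    Finset.mul_sum]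
  rw [Finset.sum_comm]
  refine Finset.sum_congr rfl fun j _ => Finset.sum_congr rfl fun i _ => ?_
  rw [h]; ring

lemma projmat_mulVec {k : ℕ} (u v : Fin k → ℂ) :
    (1 - vecMulVec u (star u)).mulVec v = v - cip u v • u := by
  rw [Matrix.sub_mulVec, Matrix.one_mulVec]
  congr 1
  funext i
  simp [Matrix.mulVec, vecMulVec_apply, dotProduct, cip, Finset.sum_mul]
  exact Finset.sum_congr rfl fun j _ => by ring

theorem stmt5 {k : ℕ} (B : Matrix (Fin k) (Fin k) ℂ) (hB : Bᴴ = B)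
    (u t : Fin k → ℂ) (hu : nsq u = 1)
    (w : Fin k → ℂ) (hw : w = proj u t)
    (τ : ℂ) (hτ : τ ≠ 0)
    (s : Fin k → ℂ) (hs : s = u + τ • w)
    (hmin : ∀ a b : ℂ, a • u + b • w ≠ 0 → rq B s ≤ rq B (a • u + b • w))
    (J : Matrix (Fin k) (Fin k) ℂ)
    (hJ : J = (1 - vecMulVec u (star u)) * (B - ((rq B s : ℝ) : ℂ) • 1) *
      (1 - vecMulVec u (star u))) :
    (B - ((rq B s : ℝ) : ℂ) • 1).mulVec s
      = (B - cip (B.mulVec u) u • 1).mulVec u + J.mulVec (s - u) := by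
  set ρ : ℝ := rq B s with hρ
  set M : Matrix (Fin k) (Fin k) ℂ := B - ((ρ : ℝ) : ℂ) • 1 with hM
  have hcuu : cip u u = 1 := by rw [cip_self, hu]; norm_num
  have hcuw : cip u w = 0 := by
    rw [hw]
    unfold proj
    rw [cip_sub_right, cip_smul_right, hcuu, mul_one, sub_self]
  -- M applied
  have hMapp : ∀ v : Fin k → ℂ, M.mulVec v = B.mulVec v - ((ρ : ℝ) : ℂ) • v := by
    intro v
    rw [hM, Matrix.sub_mulVec, Matrix.smul_mulVec, Matrix.one_mulVec]
  have hMherm : ∀ x y : Fin k → ℂ, cip (M.mulVec x) y = cip x (M.mulVec y) := by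
    intro x y
    rw [hMapp, hMapp, cip_sub_right]
    have : cip (B.mulVec x - ((ρ : ℝ) : ℂ) • x) y = cip (B.mulVec x) y - ((ρ : ℝ) : ℂ) * cip x y := by
      have : B.mulVec x - ((ρ : ℝ) : ℂ) • x = B.mulVec x + (-((ρ : ℝ) : ℂ)) • x := by
        funext i; simp [sub_eq_add_neg]
      rw [this, cip_add_left, cip_smul_left]
      simp [Complex.conj_ofReal]
      ring
    rw [this, cip_herm hB, cip_smul_right]
  -- norms
  have hcs : cip s s = 1 + (conj τ * τ) * cip w w := by
    rw [hs, cip_add_right, cip_add_left, cip_add_left, cip_smul_right, cip_smul_left,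
      cip_smul_left, cip_smul_right, hcuu, hcuw]
    have hcwu : cip w u = 0 := by rw [← conj_cip, hcuw, map_zero]
    rw [hcwu]; ring
  have hnsqs : nsq s = 1 + Complex.normSq τ * nsq w := by
    have h1 := cip_self s
    have h2 := cip_self w
    rw [hcs, h2] at h1
    have : ((nsq s : ℝ) : ℂ) = ((1 + Complex.normSq τ * nsq w : ℝ) : ℂ) := by
      rw [← h1]
      push_cast
      rw [Complex.conj_mul']
      push_cast
      ring_nf
      push_cast [Complex.normSq_eq_norm_sq]
      ring
    exact_mod_cast this
  have hnsqs_pos : 0 < nsq s := by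
    rw [hnsqs]
    have := nsq_nonneg w
    have : 0 ≤ Complex.normSq τ * nsq w := mul_nonneg (Complex.normSq_nonneg τ) this
    linarith
  have hnsqs_ne : nsq s ≠ 0 := ne_of_gt hnsqs_pos
  -- Q(s) = 0
  have hQs : (cip (B.mulVec s) s).re - ρ * nsq s = 0 := by
    rw [hρ]
    unfold rq
    field_simp
    ring
  -- Q(x) ≥ 0 for x in span
  have hQnn : ∀ a b : ℂ, a • u + b • w ≠ 0 →
      0 ≤ (cip (B.mulVec (a • u + b • w)) (a • u + b • w)).re - ρ * nsq (a • u + b • w) := by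
    intro a b hne
    have h := hmin a b hne
    have hpos : 0 < nsq (a • u + b • w) := by
      rcases lt_or_eq_of_le (nsq_nonneg (a • u + b • w)) with h' | h'
      · exact h'
      · exact absurd (nsq_eq_zero h'.symm) hne
    unfold rq at h
    rw [le_div_iff₀ hpos] at h
    linarith
  -- the key gradient condition
  have hγ : cip u (M.mulVec s) = 0 := by
    by_contra hne
    set γ : ℂ := cip u (M.mulVec s) with hγdef
    set c : ℝ := (cip (M.mulVec u) u).re with hc
    set δ : ℝ := min (1 / (2 * ‖γ‖)) (1 / (1 + |c|)) with hδ
    have hγpos : 0 < ‖γ‖ := norm_pos_iff.2 hne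
    have hδpos : 0 < δ := by
      apply lt_min
      · positivity
      · have : 0 < 1 + |c| := by positivity
        positivity
    set ε : ℂ := -(δ : ℂ) * γ with hε
    have hεnorm : ‖ε‖ = δ * ‖γ‖ := by
      rw [hε, norm_mul, norm_neg, Complex.norm_real, Real.norm_of_nonneg (le_of_lt hδpos)]
    have hεsmall : ‖ε‖ ≤ 1 / 2 := by
      rw [hεnorm]
      have h1 : δ ≤ 1 / (2 * ‖γ‖) := min_le_left _ _
      calc δ * ‖γ‖ ≤ (1 / (2 * ‖γ‖)) * ‖γ‖ := by
            apply mul_le_mul_of_nonneg_right h1 (le_of_lt hγpos)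
        _ = 1 / 2 := by
            rw [div_mul_eq_mul_div, one_mul, mul_comm 2 ‖γ‖, ← div_div,
              div_self (ne_of_gt hγpos)]
    -- x = s + ε u = (1+ε) u + τ w
    have hxeq : (1 + ε) • u + τ • w = s + ε • u := by
      rw [hs]; funext i; simp [add_smul]; ring
    have hxne : (1 + ε) • u + τ • w ≠ 0 := by
      intro h0
      have : cip u ((1 + ε) • u + τ • w) = 0 := by rw [h0]; simp [cip]
      rw [cip_add_right, cip_smul_right, cip_smul_right, hcuu, hcuw] at this
      simp at this
      have h2 : ε = -1 := by linear_combination this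
      rw [h2, norm_neg, norm_one] at hεsmall
      norm_num at hεsmall
    have hQx := hQnn (1 + ε) τ hxne
    rw [hxeq] at hQx
    -- expand Q(s + ε u)
    have hexp : (cip (B.mulVec (s + ε • u)) (s + ε • u)).re - ρ * nsq (s + ε • u)
        = 2 * (conj ε * γ).re + ‖ε‖ ^ 2 * c := by
      have hform : ∀ v : Fin k → ℂ, (cip (B.mulVec v) v).re - ρ * nsq v
          = (cip (M.mulVec v) v).re := by
        intro v
        rw [hMapp]
        have : cip (B.mulVec v - ((ρ : ℝ) : ℂ) • v) v
            = cip (B.mulVec v) v - ((ρ : ℝ) : ℂ) * cip v v := by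
          have h2 : B.mulVec v - ((ρ : ℝ) : ℂ) • v = B.mulVec v + (-((ρ : ℝ) : ℂ)) • v := by
            funext i; simp [sub_eq_add_neg]
          rw [h2, cip_add_left, cip_smul_left]
          simp [Complex.conj_ofReal]; ring
        rw [this, cip_self v]
        simp [Complex.ofReal_mul]
      rw [hform]
      have hMV : M.mulVec (s + ε • u) = M.mulVec s + ε • M.mulVec u := by
        rw [Matrix.mulVec_add, Matrix.mulVec_smul]
      rw [hMV, cip_add_left, cip_add_right, cip_add_right, cip_smul_right, cip_smul_left,
        cip_smul_left, cip_smul_right]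
      have hMss : (cip (M.mulVec s) s).re = 0 := by
        have h3 : (cip (M.mulVec s) s) = cip (B.mulVec s) s - ((ρ : ℝ) : ℂ) * cip s s := by
          rw [hMapp]
          have h2 : B.mulVec s - ((ρ : ℝ) : ℂ) • s = B.mulVec s + (-((ρ : ℝ) : ℂ)) • s := by
            funext i; simp [sub_eq_add_neg]
          rw [h2, cip_add_left, cip_smul_left]
          simp [Complex.conj_ofReal]; ring
        rw [h3, cip_self s]
        simp
        linarith [hQs]
      have hMsu : cip (M.mulVec s) u = conj γ := by
        rw [hγdef, conj_cip]
      have hMus : cip (M.mulVec u) s = γ := by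
        rw [hMherm, hγdef]
      simp only [Complex.add_re, Complex.mul_re]
      rw [hMsu] at *
      have e1 : (ε * conj γ).re = (conj ε * γ).re := by
        have h6 : ε * conj γ = conj (conj ε * γ) := by
          rw [RingHom.map_mul, Complex.conj_conj]
        rw [h6, Complex.conj_re]
      have e2 : (conj ε * (ε * cip (M.mulVec u) u)).re = ‖ε‖ ^ 2 * c := by
        have h5 : conj ε * (ε * cip (M.mulVec u) u) = (ε * conj ε) * cip (M.mulVec u) u := by
          ring
        rw [h5, Complex.mul_conj, Complex.re_ofReal_mul, ← Complex.sq_norm,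
          hc]
      have e3 : (conj ε * (cip (M.mulVec u) s)).re = (conj ε * γ).re := by rw [hMus]
      have expand : cip (M.mulVec s) s + ε * conj γ + (conj ε * cip (M.mulVec u) s
          + conj ε * (ε * cip (M.mulVec u) u))
          = cip (M.mulVec s) s + (ε * conj γ + conj ε * cip (M.mulVec u) s)
          + conj ε * (ε * cip (M.mulVec u) u) := by ring
      calc (cip (M.mulVec s) s + ε * conj γ + (conj ε * cip (M.mulVec u) s
              + conj ε * (ε * cip (M.mulVec u) u))).re
          = (cip (M.mulVec s) s).re + (ε * conj γ).re + (conj ε * cip (M.mulVec u) s).re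
            + (conj ε * (ε * cip (M.mulVec u) u)).re := by
            simp only [Complex.add_re]
            ring
        _ = 0 + (conj ε * γ).re + (conj ε * γ).re + ‖ε‖ ^ 2 * c := by
            rw [hMss, e1, e2, e3]
        _ = 2 * (conj ε * γ).re + ‖ε‖ ^ 2 * c := by ring
    rw [hexp] at hQx
    -- now derive contradiction
    have hcross : (conj ε * γ).re = -δ * ‖γ‖ ^ 2 := by
      have h5 : conj ε * γ = -(δ : ℂ) * (γ * conj γ) := by
        rw [hε]
        simp only [map_neg, RingHom.map_mul, Complex.conj_ofReal]
        ring
      rw [h5, Complex.mul_conj, ← Complex.ofReal_neg, ← Complex.ofReal_mul, Complex.ofReal_re,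
        Complex.normSq_eq_norm_sq]
    rw [hcross, hεnorm] at hQx
    have hδc : δ * c < 1 := by
      have h2 : δ ≤ 1 / (1 + |c|) := min_le_right _ _
      have h3 : c ≤ |c| := le_abs_self c
      have h4 : 0 < 1 + |c| := by positivity
      calc δ * c ≤ δ * |c| := by nlinarith [abs_nonneg c, hδpos]
        _ ≤ (1 / (1 + |c|)) * |c| := by
            apply mul_le_mul_of_nonneg_right h2 (abs_nonneg c)
        _ < 1 := by rw [div_mul_eq_mul_div, div_lt_one h4]; linarith
    nlinarith [sq_nonneg (‖γ‖), hγpos, hδpos, mul_pos hδpos (mul_pos hγpos hγpos)]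
  -- final algebra
  have hα : cip (B.mulVec u) u = cip u (B.mulVec u) := cip_herm hB u u
  have hMu : cip u (M.mulVec u) = cip u (B.mulVec u) - ((ρ : ℝ) : ℂ) := by
    rw [hMapp, cip_sub_right, cip_smul_right, hcuu, mul_one]
  have hMw : cip u (M.mulVec (τ • w)) = ((ρ : ℝ) : ℂ) - cip (B.mulVec u) u := by
    have hsplit : M.mulVec s = M.mulVec u + M.mulVec (τ • w) := by
      rw [hs, Matrix.mulVec_add]
    have : cip u (M.mulVec u) + cip u (M.mulVec (τ • w)) = 0 := by
      rw [← cip_add_right, ← hsplit, hγ]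
    rw [hMu] at this
    rw [hα]
    linear_combination this
  -- J applied to s - u
  have hsu : s - u = τ • w := by rw [hs]; funext i; simp
  have hPw : (1 - vecMulVec u (star u)).mulVec (τ • w) = τ • w := by
    rw [projmat_mulVec, cip_smul_right, hcuw, mul_zero, zero_smul, sub_zero]
  have hJapp : J.mulVec (s - u) = M.mulVec (τ • w) - (((ρ : ℝ) : ℂ) - cip (B.mulVec u) u) • u := by
    rw [hsu, hJ]
    rw [Matrix.mul_assoc, ← Matrix.mulVec_mulVec, ← Matrix.mulVec_mulVec, hPw,
      projmat_mulVec, hMw]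
  rw [hJapp]
  have hMs : M.mulVec s = M.mulVec u + M.mulVec (τ • w) := by rw [hs, Matrix.mulVec_add]
  rw [hMs]
  have hBu : (B - cip (B.mulVec u) u • 1).mulVec u = B.mulVec u - cip (B.mulVec u) u • u := by
    rw [Matrix.sub_mulVec, Matrix.smul_mulVec, Matrix.one_mulVec]
  rw [hBu, hMapp u]
  funext i
  simp [sub_smul]
  ring
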